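/- Let 𝒜 be an uncountable almost disjoint family of infinite subsets of ℕ and K_𝒜 the associated Mrówka space. The map V : C_0(K_𝒜) → ℓ_∞ defined by (Vf)(n) = f(x_n) is a linear isometry onto the closed subspace X_𝒜 = closed span of {1_A : A ∈ 𝒜 ∪ [ℕ]^{<ω}} of ℓ_∞. -/

import Mathlib

open Cardinal Set

/-- The underlying set of the Mrówka space associated with an almost disjoint family `𝒜`
of subsets of `ℕ`: the isolated points `x_n` are `Sum.inl n` and the points `y_A` are
`Sum.inr A`. -/
def Mrowka (𝒜 : Set (Set ℕ)) : Type := ℕ ⊕ ↥𝒜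

/-- The basic neighbourhood `U(A, F) = {x_n : n ∈ A \ F} ∪ {y_A}` of the point `y_A`. -/
def mrowkaNbhd {𝒜 : Set (Set ℕ)} (A : ↥𝒜) (F : Finset ℕ) : Set (Mrowka 𝒜) :=
  (Sum.inl '' ((A : Set ℕ) \ (F : Set ℕ))) ∪ {Sum.inr A}

/-- The Mrówka topology: points `x_n` are isolated and the sets `U(A, F)` form a
neighbourhood basis at `y_A`. -/
instance (𝒜 : Set (Set ℕ)) : TopologicalSpace (Mrowka 𝒜) :=
  TopologicalSpace.generateFrom
    ({s | ∃ n : ℕ, s = {Sum.inl n}} ∪ {s | ∃ (A : ↥𝒜) (F : Finset ℕ), s = mrowkaNbhd A F})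

/-- An almost disjoint family of infinite subsets of `ℕ`. -/
def ADFamily (𝒜 : Set (Set ℕ)) : Prop :=
  (∀ A ∈ 𝒜, A.Infinite) ∧ ∀ A ∈ 𝒜, ∀ B ∈ 𝒜, A ≠ B → (A ∩ B).Finite

open ZeroAtInfty

noncomputable def ind {Γ : Type*} (A : Set Γ) : lp (fun _ : Γ => ℝ) ⊤ :=
  ⟨A.indicator 1, memℓp_infty ⟨1, by
    rintro r ⟨γ, rfl⟩
    by_cases h : γ ∈ A <;> simp [Set.indicator_apply, h]⟩⟩

/-- The subspace $X_𝒜$ of $\ell_\infty$: the closed span of the indicators of members of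
$𝒜$ and of finite subsets of $ℕ$. -/
noncomputable def Xsub (𝒜 : Set (Set ℕ)) : Submodule ℝ (lp (fun _ : ℕ => ℝ) ⊤) :=
  (Submodule.span ℝ {y | ∃ B : Set ℕ, (B ∈ 𝒜 ∨ B.Finite) ∧ y = ind B}).topologicalClosure

open TopologicalSpace Filter Topology

namespace MrowkaAux

variable {𝒜 : Set (Set ℕ)}

/-- The isolated point `x_n`, with the correct ascribed type. -/
def xpt (n : ℕ) : Mrowka 𝒜 := Sum.inl n

/-- The point `y_A`, with the correct ascribed type. -/
def ypt (A : ↥𝒜) : Mrowka 𝒜 := Sum.inr A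

lemma mrowka_cases (x : Mrowka 𝒜) : (∃ n, x = xpt n) ∨ (∃ A, x = ypt A) := by
  rcases x with n | A
  · exact Or.inl ⟨n, rfl⟩
  · exact Or.inr ⟨A, rfl⟩

lemma isOpen_xpt (n : ℕ) : IsOpen ({xpt n} : Set (Mrowka 𝒜)) :=
  .basic _ (Or.inl ⟨n, rfl⟩)

lemma isOpen_nbhd (A : ↥𝒜) (F : Finset ℕ) : IsOpen (mrowkaNbhd A F) :=
  .basic _ (Or.inr ⟨A, F, rfl⟩)

lemma ypt_mem_nbhd (A : ↥𝒜) (F : Finset ℕ) : (ypt A) ∈ mrowkaNbhd A F :=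
  Or.inr rfl

lemma ypt_ne_xpt (n : ℕ) (A : ↥𝒜) : (ypt A : Mrowka 𝒜) ≠ xpt n := by
  intro h; exact Sum.inr_ne_inl h

lemma ypt_mem_nbhd_iff {A B : ↥𝒜} {F : Finset ℕ} :
    (ypt B) ∈ mrowkaNbhd A F ↔ B = A := by
  constructor
  · rintro (⟨n, -, h⟩ | h)
    · exact absurd h.symm (ypt_ne_xpt n B)
    · exact Sum.inr.inj h
  · rintro rfl; exact ypt_mem_nbhd _ F

lemma xpt_mem_nbhd_iff {A : ↥𝒜} {F : Finset ℕ} {n : ℕ} :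
    (xpt n) ∈ mrowkaNbhd A F ↔ n ∈ (A : Set ℕ) ∧ n ∉ F := by
  constructor
  · rintro (⟨m, hm, h⟩ | h)
    · obtain rfl : m = n := Sum.inl.inj h
      exact hm
    · exact absurd h (fun h => Sum.inl_ne_inr h)
  · intro h; exact Or.inl ⟨n, h, rfl⟩

lemma nbhd_mono (A : ↥𝒜) {F G : Finset ℕ} (h : F ⊆ G) : mrowkaNbhd A G ⊆ mrowkaNbhd A F := by
  rintro x (⟨n, hn, rfl⟩ | hx)
  · exact Or.inl ⟨n, ⟨hn.1, fun hF => hn.2 (h hF)⟩, rfl⟩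
  · exact Or.inr hx

lemma mk_nhds_xpt (n : ℕ) : 𝓝 (xpt n : Mrowka 𝒜) = pure (xpt n) :=
  (isOpen_singleton_iff_nhds_eq_pure (xpt n : Mrowka 𝒜)).mp (isOpen_xpt n)

lemma mk_nhds_ypt (A : ↥𝒜) : 𝓝 (ypt A) = ⨅ F : Finset ℕ, 𝓟 (mrowkaNbhd A F) := by
  have hg : 𝓝 (ypt A) = @nhds (Mrowka 𝒜) (TopologicalSpace.generateFrom
      ({s | ∃ n : ℕ, s = {Sum.inl n}} ∪
        {s | ∃ (A : ↥𝒜) (F : Finset ℕ), s = mrowkaNbhd A F})) (ypt A) := rfl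
  rw [hg, nhds_generateFrom]
  apply le_antisymm
  · exact le_iInf fun F => iInf₂_le (mrowkaNbhd A F) ⟨ypt_mem_nbhd A F, Or.inr ⟨A, F, rfl⟩⟩
  · refine le_iInf₂ fun s hs => ?_
    obtain ⟨hmem, ⟨n, rfl⟩ | ⟨B, F, rfl⟩⟩ := hs
    · exact absurd hmem (fun h => Sum.inr_ne_inl h)
    · obtain rfl : A = B := (ypt_mem_nbhd_iff.mp hmem).symm ▸ rfl
      exact iInf_le _ F

lemma hasBasis_nhds_ypt (A : ↥𝒜) :
    (𝓝 (ypt A)).HasBasis (fun _ : Finset ℕ => True) (mrowkaNbhd A) := by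
  rw [mk_nhds_ypt]
  exact Filter.hasBasis_iInf_principal
    (directed_of_isDirected_le fun F G h => nbhd_mono A h)

end MrowkaAux

namespace MrowkaAux

variable {𝒜 : Set (Set ℕ)}

lemma continuousAt_ypt_iff {f : Mrowka 𝒜 → ℝ} {A : ↥𝒜} :
    ContinuousAt f (ypt A) ↔
      ∀ ε > 0, ∃ F : Finset ℕ, ∀ n ∈ (A : Set ℕ), n ∉ F → |f (xpt n) - f (ypt A)| < ε := by
  rw [ContinuousAt, (hasBasis_nhds_ypt A).tendsto_iff Metric.nhds_basis_ball]
  constructor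
  · intro h ε hε
    obtain ⟨F, -, hF⟩ := h ε hε
    exact ⟨F, fun n hn hnF => by
      simpa [Real.dist_eq] using hF (xpt n) (xpt_mem_nbhd_iff.mpr ⟨hn, hnF⟩)⟩
  · intro h ε hε
    obtain ⟨F, hF⟩ := h ε hε
    refine ⟨F, trivial, fun x hx => ?_⟩
    rcases hx with ⟨n, hn, rfl⟩ | hx
    · show f (xpt n) ∈ Metric.ball (f (ypt A)) ε
      simpa [Real.dist_eq] using hF n hn.1 hn.2
    · obtain rfl : x = ypt A := hx
      simpa [Metric.mem_ball] using hε

lemma continuous_iff_mrowka {f : Mrowka 𝒜 → ℝ} :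
    Continuous f ↔ ∀ A : ↥𝒜,
      ∀ ε > 0, ∃ F : Finset ℕ, ∀ n ∈ (A : Set ℕ), n ∉ F → |f (xpt n) - f (ypt A)| < ε := by
  rw [continuous_iff_continuousAt]
  constructor
  · intro h A; exact continuousAt_ypt_iff.mp (h (ypt A))
  · intro h x
    rcases mrowka_cases x with ⟨n, rfl⟩ | ⟨A, rfl⟩
    · rw [ContinuousAt, mk_nhds_xpt]
      exact tendsto_pure_nhds f (xpt n)
    · exact continuousAt_ypt_iff.mpr (h A)

/-- The set `{x_n : n ∈ A} ∪ {y_A}` is compact. -/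
lemma isCompact_KA (A : ↥𝒜) :
    IsCompact ((Sum.inl '' (A : Set ℕ) ∪ {Sum.inr A}) : Set (Mrowka 𝒜)) := by
  apply isCompact_of_finite_subcover
  intro ι U hU hcov
  classical
  obtain ⟨i0, hi0⟩ := Set.mem_iUnion.mp (hcov (Or.inr rfl))
  obtain ⟨F, -, hF⟩ := (hasBasis_nhds_ypt A).mem_iff.mp ((hU i0).mem_nhds hi0)
  have hfin : ((Sum.inl '' ((F : Set ℕ) ∩ (A : Set ℕ))) : Set (Mrowka 𝒜)).Finite :=
    (F.finite_toSet.inter_of_left _).image _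
  have hsub : ((Sum.inl '' ((F : Set ℕ) ∩ (A : Set ℕ))) : Set (Mrowka 𝒜)) ⊆ ⋃ i, U i := by
    intro x hx
    apply hcov
    obtain ⟨n, hn, rfl⟩ := hx
    exact Or.inl ⟨n, hn.2, rfl⟩
  obtain ⟨t, ht⟩ := hfin.isCompact.elim_finite_subcover U hU hsub
  refine ⟨insert i0 t, fun x hx => ?_⟩
  rcases hx with ⟨n, hn, rfl⟩ | hx
  · by_cases hnF : n ∈ F
    · have this : (xpt n : Mrowka 𝒜) ∈ ⋃ i ∈ t, U i := ht ⟨n, ⟨hnF, hn⟩, rfl⟩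
      change (xpt n : Mrowka 𝒜) ∈ ⋃ i ∈ insert i0 t, U i
      simp only [Set.mem_iUnion] at this ⊢
      obtain ⟨i, hi, hxi⟩ := this
      exact ⟨i, Finset.mem_insert_of_mem hi, hxi⟩
    · have : (xpt n : Mrowka 𝒜) ∈ mrowkaNbhd A F := xpt_mem_nbhd_iff.mpr ⟨hn, hnF⟩
      exact Set.mem_iUnion.mpr ⟨i0, Set.mem_iUnion.mpr ⟨Finset.mem_insert_self _ _, hF this⟩⟩
  · obtain rfl : x = ypt A := hx
    exact Set.mem_iUnion.mpr ⟨i0, Set.mem_iUnion.mpr ⟨Finset.mem_insert_self _ _, hF (ypt_mem_nbhd A F)⟩⟩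

/-- A compact set all of whose points are "isolated within the set" is finite. -/
lemma finite_of_compact_isolated {X : Type*} [TopologicalSpace X] {s : Set X}
    (hs : IsCompact s) (h : ∀ x ∈ s, ∃ U, IsOpen U ∧ x ∈ U ∧ ∀ y ∈ U ∩ s, y = x) :
    s.Finite := by
  choose U hUo hxU hUs using h
  obtain ⟨t, ht⟩ := hs.elim_finite_subcover (fun x : s => U x x.2) (fun x => hUo _ _)
    (fun x hx => Set.mem_iUnion.mpr ⟨⟨x, hx⟩, hxU _ _⟩)
  refine Set.Finite.subset (t.finite_toSet.image (fun x : s => (x : X))) ?_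
  intro x hx
  obtain ⟨y, hyt, hxy⟩ := Set.mem_iUnion₂.mp (ht hx)
  exact ⟨y, hyt, (hUs _ y.2 x ⟨hxy, hx⟩).symm⟩

lemma isClosed_range_ypt : IsClosed (Set.range (ypt : ↥𝒜 → Mrowka 𝒜)) := by
  rw [← isOpen_compl_iff]
  have : (Set.range (ypt : ↥𝒜 → Mrowka 𝒜))ᶜ = ⋃ n, {xpt n} := by
    ext x
    rcases mrowka_cases x with ⟨n, rfl⟩ | ⟨A, rfl⟩
    · simp only [Set.mem_compl_iff, Set.mem_range, Set.mem_iUnion, Set.mem_singleton_iff]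
      exact ⟨fun _ => ⟨n, rfl⟩, fun _ h => by obtain ⟨B, hB⟩ := h; exact Sum.inr_ne_inl hB⟩
    · simp only [Set.mem_compl_iff, Set.mem_range, Set.mem_iUnion, Set.mem_singleton_iff]
      constructor
      · intro hc; exact absurd ⟨A, rfl⟩ hc
      · rintro ⟨n, hn⟩; exact absurd hn (ypt_ne_xpt n A)
  rw [this]
  exact isOpen_iUnion fun n => isOpen_xpt n

end MrowkaAux

open ZeroAtInfty

namespace MrowkaAux

variable {𝒜 : Set (Set ℕ)}

lemma ypt_injective : Function.Injective (ypt : ↥𝒜 → Mrowka 𝒜) :=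
  fun _ _ h => Sum.inr.inj h

lemma xpt_injective : Function.Injective (xpt : ℕ → Mrowka 𝒜) :=
  fun _ _ h => Sum.inl.inj h

lemma exists_compact_norm_lt (f : C₀(Mrowka 𝒜, ℝ)) {ε : ℝ} (hε : 0 < ε) :
    ∃ K : Set (Mrowka 𝒜), IsCompact K ∧ ∀ x ∉ K, |f x| < ε := by
  have h := (Filter.hasBasis_cocompact.tendsto_iff Metric.nhds_basis_ball).mp
    (zero_at_infty f) ε hε
  obtain ⟨K, hK, hKf⟩ := h
  exact ⟨K, hK, fun x hx => by simpa [Real.dist_eq] using hKf x hx⟩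

lemma finite_S (f : C₀(Mrowka 𝒜, ℝ)) {ε : ℝ} (hε : 0 < ε) :
    {A : ↥𝒜 | ε ≤ |f (ypt A)|}.Finite := by
  obtain ⟨K, hK, hKf⟩ := exists_compact_norm_lt f hε
  have hcpt : IsCompact (K ∩ Set.range (ypt : ↥𝒜 → Mrowka 𝒜)) :=
    hK.inter_right isClosed_range_ypt
  have hfin : (K ∩ Set.range (ypt : ↥𝒜 → Mrowka 𝒜)).Finite := by
    apply finite_of_compact_isolated hcpt
    rintro x ⟨hxK, A, rfl⟩
    refine ⟨mrowkaNbhd A ∅, isOpen_nbhd A ∅, ypt_mem_nbhd A ∅, ?_⟩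
    rintro y ⟨hy, -, B, rfl⟩
    exact congrArg ypt (ypt_mem_nbhd_iff.mp hy)
  have hsub : {A : ↥𝒜 | ε ≤ |f (ypt A)|} ⊆ ypt ⁻¹' (K ∩ Set.range ypt) := by
    intro A hA
    refine ⟨?_, A, rfl⟩
    by_contra hxK
    exact absurd (hKf _ hxK) (not_lt.mpr hA)
  exact ((hfin.preimage ypt_injective.injOn).subset hsub)

lemma finite_T (f : C₀(Mrowka 𝒜, ℝ)) {ε : ℝ} (hε : 0 < ε) :
    {n : ℕ | ε ≤ |f (xpt n)| ∧ ∀ A : ↥𝒜, ε ≤ |f (ypt A)| → n ∉ (A : Set ℕ)}.Finite := by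
  obtain ⟨K, hK, hKf⟩ := exists_compact_norm_lt f hε
  set T := {n : ℕ | ε ≤ |f (xpt n)| ∧ ∀ A : ↥𝒜, ε ≤ |f (ypt A)| → n ∉ (A : Set ℕ)} with hT
  have hcont := continuous_iff_mrowka.mp (map_continuous f)
  have hclosed : IsClosed ((Sum.inl '' T) : Set (Mrowka 𝒜)) := by
    rw [← isOpen_compl_iff, isOpen_iff_forall_mem_open]
    intro x hx
    rcases mrowka_cases x with ⟨n, rfl⟩ | ⟨A, rfl⟩
    · refine ⟨{xpt n}, ?_, isOpen_xpt n, rfl⟩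
      intro y hy
      obtain rfl : y = xpt n := hy
      exact hx
    · by_cases hA : ε ≤ |f (ypt A)|
      · refine ⟨mrowkaNbhd A ∅, ?_, isOpen_nbhd A ∅, ypt_mem_nbhd A ∅⟩
        rintro y (⟨n, hn, rfl⟩ | hy)
        · rintro ⟨m, hm, hmn⟩
          rw [show m = n from Sum.inl.inj hmn] at hm
          exact hm.2 A hA hn.1
        · obtain rfl : y = ypt A := hy
          rintro ⟨m, -, hmn⟩
          exact Sum.inl_ne_inr hmn
      · push_neg at hA
        obtain ⟨F, hF⟩ := hcont A (ε - |f (ypt A)|) (by linarith)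
        refine ⟨mrowkaNbhd A F, ?_, isOpen_nbhd A F, ypt_mem_nbhd A F⟩
        rintro y (⟨k, hk, rfl⟩ | hy)
        · rintro ⟨m, hm, hmn⟩
          rw [show m = k from Sum.inl.inj hmn] at hm
          have h1 := hF k hk.1 hk.2
          have h2 : |f (xpt k)| < ε := by
            have h3 := abs_sub_abs_le_abs_sub (f (xpt k)) (f (ypt A))
            linarith
          exact absurd hm.1 (not_le.mpr h2)
        · obtain rfl : y = ypt A := hy
          rintro ⟨m, -, hmn⟩
          exact Sum.inl_ne_inr hmn
  have hsubK : ((Sum.inl '' T) : Set (Mrowka 𝒜)) ⊆ K := by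
    rintro x ⟨n, hn, rfl⟩
    by_contra hxK
    exact absurd (hKf _ hxK) (not_lt.mpr hn.1)
  have hcpt : IsCompact ((Sum.inl '' T) : Set (Mrowka 𝒜)) := hK.of_isClosed_subset hclosed hsubK
  have hfin : ((Sum.inl '' T) : Set (Mrowka 𝒜)).Finite := by
    apply finite_of_compact_isolated hcpt
    rintro x ⟨n, hn, rfl⟩
    refine ⟨{xpt n}, isOpen_xpt n, rfl, ?_⟩
    rintro y ⟨hy, -⟩
    exact hy
  exact (hfin.preimage xpt_injective.injOn).subset (fun n hn => ⟨n, hn, rfl⟩)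

end MrowkaAux

namespace MrowkaAux

variable {𝒜 : Set (Set ℕ)}

lemma ind_apply {Γ : Type*} (A : Set Γ) (γ : Γ) : ind A γ = A.indicator 1 γ := rfl

open Classical in
noncomputable def gA (A : ↥𝒜) : Mrowka 𝒜 → ℝ := fun x =>
  match x with
  | Sum.inl n => Set.indicator (A : Set ℕ) 1 n
  | Sum.inr B => if B = A then 1 else 0

lemma gA_xpt (A : ↥𝒜) (n : ℕ) : gA A (xpt n) = Set.indicator (A : Set ℕ) 1 n := rfl
open Classical in
lemma gA_ypt (A B : ↥𝒜) : gA A (ypt B) = if B = A then 1 else 0 := rfl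

lemma gA_ypt_self (A : ↥𝒜) : gA A (ypt A) = 1 := by rw [gA_ypt, if_pos rfl]
lemma gA_ypt_ne {A B : ↥𝒜} (h : B ≠ A) : gA A (ypt B) = 0 := by rw [gA_ypt, if_neg h]

lemma continuous_gA (had : ADFamily 𝒜) (A : ↥𝒜) : Continuous (gA A) := by
  rw [continuous_iff_mrowka]
  intro B ε hε
  by_cases hBA : B = A
  · subst hBA
    refine ⟨∅, fun n hn _ => ?_⟩
    rw [gA_xpt, gA_ypt_self, Set.indicator_of_mem hn]
    simpa using hε
  · have hfin : ((B : Set ℕ) ∩ (A : Set ℕ)).Finite :=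
      had.2 B B.2 A A.2 (fun h => hBA (Subtype.coe_injective h))
    refine ⟨hfin.toFinset, fun n hn hnF => ?_⟩
    have hnA : n ∉ (A : Set ℕ) := fun hnA => hnF (hfin.mem_toFinset.mpr ⟨hn, hnA⟩)
    rw [gA_xpt, gA_ypt_ne hBA, Set.indicator_of_notMem hnA]
    simpa using hε

lemma zero_at_infty_gA (A : ↥𝒜) :
    Filter.Tendsto (gA A) (Filter.cocompact (Mrowka 𝒜)) (nhds 0) := by
  rw [Filter.hasBasis_cocompact.tendsto_iff Metric.nhds_basis_ball]
  intro ε hε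
  refine ⟨(Sum.inl '' (A : Set ℕ) ∪ {Sum.inr A}), isCompact_KA A, fun x hx => ?_⟩
  have : gA A x = 0 := by
    rcases mrowka_cases x with ⟨n, rfl⟩ | ⟨B, rfl⟩
    · have hnA : n ∉ (A : Set ℕ) := fun h => hx (Or.inl ⟨n, h, rfl⟩)
      rw [gA_xpt, Set.indicator_of_notMem hnA]
    · have hBA : B ≠ A := fun h => hx (Or.inr (by rw [h]; rfl))
      exact gA_ypt_ne hBA
  simp [this, Metric.mem_ball, hε]

noncomputable def fA (had : ADFamily 𝒜) (A : ↥𝒜) : C₀(Mrowka 𝒜, ℝ) :=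
  ⟨⟨gA A, continuous_gA had A⟩, zero_at_infty_gA A⟩

lemma fA_apply (had : ADFamily 𝒜) (A : ↥𝒜) (x : Mrowka 𝒜) : fA had A x = gA A x := rfl

noncomputable def gF (B : Set ℕ) : Mrowka 𝒜 → ℝ := fun x =>
  match x with
  | Sum.inl n => B.indicator 1 n
  | Sum.inr _ => 0

lemma gF_xpt (B : Set ℕ) (n : ℕ) : gF (𝒜 := 𝒜) B (xpt n) = B.indicator 1 n := rfl
lemma gF_ypt (B : Set ℕ) (A : ↥𝒜) : gF B (ypt A) = 0 := rfl

lemma continuous_gF {B : Set ℕ} (hB : B.Finite) : Continuous (gF (𝒜 := 𝒜) B) := by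
  rw [continuous_iff_mrowka]
  intro A ε hε
  refine ⟨hB.toFinset, fun n hn hnF => ?_⟩
  have hnB : n ∉ B := fun h => hnF (hB.mem_toFinset.mpr h)
  rw [gF_xpt, gF_ypt, Set.indicator_of_notMem hnB]
  simpa using hε

lemma zero_at_infty_gF {B : Set ℕ} (hB : B.Finite) :
    Filter.Tendsto (gF (𝒜 := 𝒜) B) (Filter.cocompact (Mrowka 𝒜)) (nhds 0) := by
  rw [Filter.hasBasis_cocompact.tendsto_iff Metric.nhds_basis_ball]
  intro ε hε
  refine ⟨(Sum.inl '' B : Set (Mrowka 𝒜)), (hB.image _).isCompact, fun x hx => ?_⟩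
  have : gF (𝒜 := 𝒜) B x = 0 := by
    rcases mrowka_cases x with ⟨n, rfl⟩ | ⟨A, rfl⟩
    · have hnB : n ∉ B := fun h => hx ⟨n, h, rfl⟩
      rw [gF_xpt, Set.indicator_of_notMem hnB]
    · exact gF_ypt B A
  simp [this, Metric.mem_ball, hε]

noncomputable def fF {B : Set ℕ} (hB : B.Finite) : C₀(Mrowka 𝒜, ℝ) :=
  ⟨⟨gF B, continuous_gF hB⟩, zero_at_infty_gF hB⟩

lemma norm_apply_le (f : C₀(Mrowka 𝒜, ℝ)) (x : Mrowka 𝒜) : ‖f x‖ ≤ ‖f‖ := by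
  rw [← ZeroAtInftyContinuousMap.norm_toBCF_eq_norm]
  exact f.toBCF.norm_coe_le_norm x

variable (𝒜) in
noncomputable def Vlin : C₀(Mrowka 𝒜, ℝ) →ₗ[ℝ] lp (fun _ : ℕ => ℝ) ⊤ where
  toFun f := ⟨fun n => f (xpt n), memℓp_infty ⟨‖f‖, by
    rintro r ⟨n, rfl⟩
    exact norm_apply_le f (xpt n)⟩⟩
  map_add' f g := rfl
  map_smul' c f := rfl

lemma Vlin_apply (f : C₀(Mrowka 𝒜, ℝ)) (n : ℕ) : Vlin 𝒜 f n = f (xpt n) := rfl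

lemma norm_Vlin (had : ADFamily 𝒜) (f : C₀(Mrowka 𝒜, ℝ)) : ‖Vlin 𝒜 f‖ = ‖f‖ := by
  apply le_antisymm
  · exact lp.norm_le_of_forall_le (norm_nonneg f) fun n => norm_apply_le f (xpt n)
  · rw [← ZeroAtInftyContinuousMap.norm_toBCF_eq_norm]
    refine (BoundedContinuousFunction.norm_le (norm_nonneg _)).mpr fun x => ?_
    have hx : (f.toBCF x : ℝ) = f x := rfl
    rw [hx]
    rcases mrowka_cases x with ⟨n, rfl⟩ | ⟨A, rfl⟩
    · exact (lp.norm_apply_le_norm ENNReal.top_ne_zero (Vlin 𝒜 f) n)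
    · refine le_of_forall_pos_le_add fun ε hε => ?_
      obtain ⟨F, hF⟩ := continuous_iff_mrowka.mp (map_continuous f) A ε hε
      obtain ⟨n, hnA, hnF⟩ := ((had.1 A A.2).diff F.finite_toSet).nonempty
      have h1 : |f (xpt n) - f (ypt A)| < ε := hF n hnA hnF
      have h2 : ‖f (xpt n)‖ ≤ ‖Vlin 𝒜 f‖ := lp.norm_apply_le_norm ENNReal.top_ne_zero (Vlin 𝒜 f) n
      have h3 : |f (ypt A)| ≤ |f (xpt n)| + |f (xpt n) - f (ypt A)| := by
        have := abs_sub_abs_le_abs_sub (f (ypt A)) (f (xpt n))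
        have h4 : |f (ypt A) - f (xpt n)| = |f (xpt n) - f (ypt A)| := abs_sub_comm _ _
        linarith
      calc ‖f (ypt A)‖ ≤ |f (xpt n)| + |f (xpt n) - f (ypt A)| := h3
        _ ≤ ‖Vlin 𝒜 f‖ + ε := add_le_add h2 h1.le

end MrowkaAux

open MrowkaAux in
theorem mrowka_isometry_onto_Xsub (𝒜 : Set (Set ℕ)) (had : ADFamily 𝒜)
    (hunc : ¬𝒜.Countable) :
    ∃ V : C₀(Mrowka 𝒜, ℝ) →ₗᵢ[ℝ] lp (fun _ : ℕ => ℝ) ⊤,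
      (∀ (f : C₀(Mrowka 𝒜, ℝ)) (n : ℕ), V f n = f (Sum.inl n)) ∧
      Set.range V = (Xsub 𝒜 : Set (lp (fun _ : ℕ => ℝ) ⊤)) := by
  classical
  set gens : Set (lp (fun _ : ℕ => ℝ) ⊤) :=
    {y | ∃ B : Set ℕ, (B ∈ 𝒜 ∨ B.Finite) ∧ y = ind B} with hgens
  refine ⟨⟨Vlin 𝒜, norm_Vlin had⟩, fun f n => rfl, ?_⟩
  have key : ∀ (f : C₀(Mrowka 𝒜, ℝ)) (ε : ℝ), 0 < ε →
      ∃ g ∈ Submodule.span ℝ gens, ‖Vlin 𝒜 f - g‖ ≤ ε := by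
    intro f ε hε
    obtain hS := finite_S f hε
    obtain hT := finite_T f hε
    set S : Set ↥𝒜 := {A : ↥𝒜 | ε ≤ |f (ypt A)|} with hSdef
    choose FA hFA using fun A : ↥𝒜 => continuous_iff_mrowka.mp (map_continuous f) A ε hε
    have hP : (⋃ A ∈ S, ⋃ B ∈ S, (if A = B then (∅ : Set ℕ) else (A : Set ℕ) ∩ B)).Finite := by
      refine hS.biUnion fun A _ => hS.biUnion fun B _ => ?_
      split_ifs with h
      · exact Set.finite_empty
      · exact had.2 A A.2 B B.2 (fun hc => h (Subtype.coe_injective hc))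
    set E : Finset ℕ := hT.toFinset ∪ hS.toFinset.biUnion FA ∪ hP.toFinset with hE
    set σ : ℕ → ℝ := fun m => ∑ A ∈ hS.toFinset, if m ∈ (A : Set ℕ) then f (ypt A) else 0
      with hσ
    set g : lp (fun _ : ℕ => ℝ) ⊤ :=
      (∑ A ∈ hS.toFinset, f (ypt A) • ind (A : Set ℕ)) +
        ∑ n ∈ E, (f (xpt n) - σ n) • ind ({n} : Set ℕ) with hg
    have hgmem : g ∈ Submodule.span ℝ gens := by
      apply Submodule.add_mem
      · exact Submodule.sum_mem _ fun A _ => Submodule.smul_mem _ _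
          (Submodule.subset_span ⟨(A : Set ℕ), Or.inl A.2, rfl⟩)
      · exact Submodule.sum_mem _ fun n _ => Submodule.smul_mem _ _
          (Submodule.subset_span ⟨({n} : Set ℕ), Or.inr (Set.finite_singleton n), rfl⟩)
    refine ⟨g, hgmem, lp.norm_le_of_forall_le hε.le fun m => ?_⟩
    have hg1 : (∑ A ∈ hS.toFinset, f (ypt A) • ind (A : Set ℕ)) m = σ m := by
      rw [lp.coeFn_sum, Finset.sum_apply, hσ]
      refine Finset.sum_congr rfl fun A _ => ?_
      rw [lp.coeFn_smul, Pi.smul_apply, ind_apply, Set.indicator_apply]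
      by_cases h : m ∈ (A : Set ℕ) <;> simp [h]
    have hg2 : (∑ n ∈ E, (f (xpt n) - σ n) • ind ({n} : Set ℕ)) m =
        if m ∈ E then f (xpt m) - σ m else 0 := by
      rw [lp.coeFn_sum, Finset.sum_apply]
      have : ∀ n ∈ E, ((f (xpt n) - σ n) • ind ({n} : Set ℕ)) m =
          if n = m then f (xpt n) - σ n else 0 := by
        intro n _
        rw [lp.coeFn_smul, Pi.smul_apply, ind_apply, Set.indicator_apply]
        by_cases h : m ∈ ({n} : Set ℕ)
        · obtain rfl : m = n := h
          simp
        · have : ¬(n = m) := fun hc => h (by simp [hc])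
          simp [h, this]
      rw [Finset.sum_congr rfl this, Finset.sum_ite_eq' E m (fun x => f (xpt x) - σ x)]
    have hval : (Vlin 𝒜 f - g : lp (fun _ : ℕ => ℝ) ⊤) m =
        if m ∈ E then 0 else f (xpt m) - σ m := by
      rw [lp.coeFn_sub, Pi.sub_apply, Vlin_apply, hg, lp.coeFn_add, Pi.add_apply, hg1, hg2]
      by_cases h : m ∈ E <;> simp [h]
    rw [hval]
    by_cases hmE : m ∈ E
    · simp [hmE, hε.le]
    · rw [if_neg hmE]
      by_cases hex : ∃ A ∈ hS.toFinset, m ∈ (A : Set ℕ)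
      · obtain ⟨A, hAS, hmA⟩ := hex
        have huniq : ∀ B ∈ hS.toFinset, m ∈ (B : Set ℕ) → B = A := by
          intro B hBS hmB
          by_contra hBA
          apply hmE
          rw [hE]
          refine Finset.mem_union_right _ (hP.mem_toFinset.mpr ?_)
          refine Set.mem_biUnion (hS.mem_toFinset.mp hBS) ?_
          refine Set.mem_biUnion (hS.mem_toFinset.mp hAS) ?_
          rw [if_neg hBA]
          exact ⟨hmB, hmA⟩
        have hσA : σ m = f (ypt A) := by
          simp only [hσ]
          rw [Finset.sum_eq_single_of_mem A hAS]
          · rw [if_pos hmA]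
          · intro B hBS hBA
            exact if_neg (fun hmB => hBA (huniq B hBS hmB))
        have hmFA : m ∉ FA A := fun hc => hmE (by
          rw [hE]
          exact Finset.mem_union_left _
            (Finset.mem_union_right _ (Finset.mem_biUnion.mpr ⟨A, hAS, hc⟩)))
        rw [hσA, Real.norm_eq_abs]
        exact (hFA A m hmA hmFA).le
      · have hσ0 : σ m = 0 := by
          simp only [hσ]
          exact Finset.sum_eq_zero fun B hBS => if_neg (fun hmB => hex ⟨B, hBS, hmB⟩)
        rw [hσ0, sub_zero, Real.norm_eq_abs]
        by_contra hlt
        push_neg at hlt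
        apply hmE
        rw [hE]
        refine Finset.mem_union_left _ (Finset.mem_union_left _ (hT.mem_toFinset.mpr ?_))
        exact ⟨hlt.le, fun A hA hmA => hex ⟨A, hS.mem_toFinset.mpr hA, hmA⟩⟩
  have hXeq : Xsub 𝒜 = (Submodule.span ℝ gens).topologicalClosure := rfl
  apply Set.Subset.antisymm
  · rintro _ ⟨f, rfl⟩
    show Vlin 𝒜 f ∈ (Xsub 𝒜 : Set (lp (fun _ : ℕ => ℝ) ⊤))
    rw [hXeq, Submodule.topologicalClosure_coe]
    refine Metric.mem_closure_iff.mpr fun δ hδ => ?_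
    obtain ⟨g, hgmem, hgle⟩ := key f (δ/2) (by linarith)
    exact ⟨g, hgmem, by rw [dist_eq_norm]; linarith⟩
  · intro z hz
    have hiso : Isometry (⇑(Vlin 𝒜)) :=
      (⟨Vlin 𝒜, norm_Vlin had⟩ : C₀(Mrowka 𝒜, ℝ) →ₗᵢ[ℝ] lp (fun _ : ℕ => ℝ) ⊤).isometry
    have hrange : IsClosed (Set.range (⇑(Vlin 𝒜))) :=
      hiso.isClosedEmbedding.isClosed_range
    have hle : Xsub 𝒜 ≤ LinearMap.range (Vlin 𝒜) := by
      rw [hXeq]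
      apply Submodule.topologicalClosure_minimal
      · rw [Submodule.span_le]
        rintro y ⟨B, hB | hBfin, rfl⟩
        · exact ⟨fA had ⟨B, hB⟩, lp.ext rfl⟩
        · exact ⟨fF hBfin, lp.ext rfl⟩
      · rw [show (LinearMap.range (Vlin 𝒜) : Set (lp (fun _ : ℕ => ℝ) ⊤)) =
            Set.range ⇑(Vlin 𝒜) from LinearMap.coe_range _]
        exact hrange
    obtain ⟨f, hf⟩ := hle hz
    exact ⟨f, hf⟩
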